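/- For the matrix factorisation d_X = σ_1 z_1 + σ_2 z_2 of V = z_1² + z_2² (with W = 0), the composite map Z = (ρ ∘ (1 ⊗ ev)) ∘ (coev ⊗ 1) ∘ λ^{−1} defined by the explicit formulas λ^{−1}(e_i) = Σ_{l≥0} Σ_{a_1<...<a_l} Σ_j θ_{a_1}...θ_{a_l} {σ_{a_l}...σ_{a_1}}_{ji} ⊗ e_j, ev(ν ⊗ η) = (i/4)(−1)^{|η|} ν(η)|_{z=0}, and coev(θ_{a_1}...θ_{a_l}) = Σ_{i,j} (−1)^{r(r+1)/2 + s} {σ_{b_1}...σ_{b_r}}_{ij} e_i ⊗ e_j^* (where θ_{a_1}...θ_{a_l}θ_{b_1}...θ_{b_r} = (−1)^s θ_1θ_2) is the identity map on X; i.e. the first Zorro move holds for this example. -/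

import Mathlib

open Matrix

/-- Pauli matrices `σ₁, σ₂`, indexed by `Fin 2` (index `0 ↔ σ₁`, `1 ↔ σ₂`). -/
def pauli : Fin 2 → Matrix (Fin 2) (Fin 2) ℂ
  | 0 => !![0, 1; 1, 0]
  | 1 => !![0, -Complex.I; Complex.I, 0]

/-- Ascending ordered product `σ_{a₁}⋯σ_{a_l}` over a subset `{a₁ < … < a_l}`. -/
noncomputable def prodAsc (S : Finset (Fin 2)) : Matrix (Fin 2) (Fin 2) ℂ :=
  ((S.sort (· ≤ ·)).map pauli).prod

/-- Descending ordered product `σ_{a_l}⋯σ_{a₁}`. -/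
noncomputable def prodDesc (S : Finset (Fin 2)) : Matrix (Fin 2) (Fin 2) ℂ :=
  ((S.sort (· ≤ ·)).reverse.map pauli).prod

/-- The sign `s` defined by `θ_{a₁}…θ_{a_l}θ_{b₁}…θ_{b_r} = (-1)^s θ₁θ₂`. -/
def invSign (S : Finset (Fin 2)) : ℕ :=
  ((S ×ˢ Sᶜ).filter fun p => p.2 < p.1).card

/-- The matrix of the Zorro composite
`Z = (ρ ∘ (1 ⊗ ev)) ∘ (coev ⊗ 1) ∘ λ⁻¹` for `d_X = σ₁z₁ + σ₂z₂`, obtained by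
substituting the explicit formulas
`λ⁻¹(e_i) = Σ_S Σ_j θ_{a₁}…θ_{a_l} {σ_{a_l}⋯σ_{a₁}}_{ji} ⊗ e_j`,
`coev(θ_{a₁}…θ_{a_l}) = Σ_{i',j'} (-1)^{r(r+1)/2+s}{σ_{b₁}⋯σ_{b_r}}_{i'j'} e_{i'} ⊗ e_{j'}^*`,
and `ev(e_{j'}^* ⊗ e_j) = (i/4)(-1)^{|e_j|} δ_{j'j}` (evaluated at `z = 0`);
the coefficient of `e_{i'}` in `Z(e_i)` is the `(i', i)`-entry. -/
noncomputable def zorroComposite : Matrix (Fin 2) (Fin 2) ℂ := fun i' i =>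
  ∑ S : Finset (Fin 2), ∑ j : Fin 2,
    (-1 : ℂ) ^ (Sᶜ.card * (Sᶜ.card + 1) / 2 + invSign S) *
      (prodAsc Sᶜ) i' j * (Complex.I / 4) * (-1 : ℂ) ^ (j : ℕ) * (prodDesc S) j i


lemma sort01 : Finset.sort ({0,1} : Finset (Fin 2)) (· ≤ ·) = [0,1] := by
  rw [Finset.sort_insert (r := (· ≤ ·)) (by decide) (by decide), Finset.sort_singleton]

lemma prodAsc_empty : prodAsc ∅ = 1 := by simp [prodAsc]
lemma prodAsc_0 : prodAsc {0} = pauli 0 := by simp [prodAsc]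
lemma prodAsc_1 : prodAsc {1} = pauli 1 := by simp [prodAsc]
lemma prodAsc_01 : prodAsc {0,1} = pauli 0 * pauli 1 := by simp [prodAsc, sort01]
lemma prodDesc_empty : prodDesc ∅ = 1 := by simp [prodDesc]
lemma prodDesc_0 : prodDesc {0} = pauli 0 := by simp [prodDesc]
lemma prodDesc_1 : prodDesc {1} = pauli 1 := by simp [prodDesc]
lemma prodDesc_01 : prodDesc {0,1} = pauli 1 * pauli 0 := by simp [prodDesc, sort01]

lemma compl_e : (∅ : Finset (Fin 2))ᶜ = {0,1} := by decide
lemma compl_0 : ({0} : Finset (Fin 2))ᶜ = {1} := by decide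
lemma compl_1 : ({1} : Finset (Fin 2))ᶜ = {0} := by decide
lemma compl_01 : ({0,1} : Finset (Fin 2))ᶜ = ∅ := by decide
lemma inv_e : invSign (∅ : Finset (Fin 2)) = 0 := by decide
lemma inv_0 : invSign ({0} : Finset (Fin 2)) = 0 := by decide
lemma inv_1 : invSign ({1} : Finset (Fin 2)) = 1 := by decide
lemma inv_01 : invSign ({0,1} : Finset (Fin 2)) = 0 := by decide

/-- The first Zorro move for the matrix factorisation `d_X = σ₁z₁ + σ₂z₂` of
`V = z₁² + z₂²` (with `W = 0`): the composite
`Z = (ρ ∘ (1 ⊗ ev)) ∘ (coev ⊗ 1) ∘ λ⁻¹` is the identity map on `X`. -/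
theorem zorro_move_pauli_example : zorroComposite = 1 := by
  have huniv : (Finset.univ : Finset (Finset (Fin 2))) = {∅, {0}, {1}, {0,1}} := by decide
  funext i' i
  show (∑ S : Finset (Fin 2), _) = _
  rw [huniv]
  rw [show ({∅, {0}, {1}, {0,1}} : Finset (Finset (Fin 2))) =
      insert ∅ (insert {0} (insert {1} {({0,1} : Finset (Fin 2))})) from rfl]
  rw [Finset.sum_insert (by decide), Finset.sum_insert (by decide),
    Finset.sum_insert (by decide), Finset.sum_singleton]
  simp only [compl_e, compl_0, compl_1, compl_01, inv_e, inv_0, inv_1, inv_01,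
    prodAsc_empty, prodAsc_0, prodAsc_1, prodAsc_01, prodDesc_empty, prodDesc_0,
    prodDesc_1, prodDesc_01, Fin.sum_univ_two]
  fin_cases i' <;> fin_cases i <;>
    simp [pauli, Matrix.mul_apply, Fin.sum_univ_two, Matrix.one_apply,
      Finset.card_insert_of_notMem, Complex.ext_iff] <;> ring_nf <;>
    simp [Complex.I_sq] <;> ring
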